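/- Assume the uniform exponential convergence ||P_μ(X_t ∈ · | t < τ∂) − α||_TV ≤ C e^{-γ t} for all probability measures μ on E and all t ≥ 0. Then there exists a constant a₁ > 0 such that |η_{t+s}(x)/η_t(x) − 1| ≤ a₁ e^{-γ t} for all x ∈ E and s, t ≥ 0, where η_t(x) = e^{λ₀ t} P_x(t < τ∂). -/

import Mathlib

open MeasureTheory Real

/-- Total variation distance `‖μ − ν‖_TV = sup_A |μ(A) − ν(A)|`. -/
noncomputable def tv {E : Type*} [MeasurableSpace E] (μ ν : Measure E) : ℝ :=
  ⨆ s : {s : Set E // MeasurableSet s}, |(μ s.1).toReal - (ν s.1).toReal|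


lemma tv_bddAbove {E : Type*} [MeasurableSpace E] (μ ν : Measure E)
    [IsProbabilityMeasure μ] [IsProbabilityMeasure ν] :
    BddAbove (Set.range fun s : {s : Set E // MeasurableSet s} =>
      |(μ s.1).toReal - (ν s.1).toReal|) := by
  refine ⟨2, ?_⟩
  rintro _ ⟨s, rfl⟩
  have h1 : (μ s.1).toReal ≤ 1 := by
    have := prob_le_one (μ := μ) (s := s.1)
    simpa using ENNReal.toReal_le_of_le_ofReal zero_le_one (by simpa)
  have h2 : (ν s.1).toReal ≤ 1 := by
    have := prob_le_one (μ := ν) (s := s.1)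
    simpa using ENNReal.toReal_le_of_le_ofReal zero_le_one (by simpa)
  have h3 : 0 ≤ (μ s.1).toReal := ENNReal.toReal_nonneg
  have h4 : 0 ≤ (ν s.1).toReal := ENNReal.toReal_nonneg
  rw [abs_sub_le_iff]; constructor <;> linarith

lemma le_tv {E : Type*} [MeasurableSpace E] (μ ν : Measure E)
    [IsProbabilityMeasure μ] [IsProbabilityMeasure ν] {s : Set E} (hs : MeasurableSet s) :
    |(μ s).toReal - (ν s).toReal| ≤ tv μ ν :=
  le_ciSup (tv_bddAbove μ ν) (⟨s, hs⟩ : {s : Set E // MeasurableSet s})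

lemma abs_integral_sub_le_tv {E : Type*} [MeasurableSpace E] (μ ν : Measure E)
    [IsProbabilityMeasure μ] [IsProbabilityMeasure ν] {f : E → ℝ} (hf : Measurable f)
    {M : ℝ} (h0 : ∀ x, 0 ≤ f x) (hM : ∀ x, f x ≤ M) (hM0 : 0 ≤ M) :
    |∫ x, f x ∂μ - ∫ x, f x ∂ν| ≤ M * tv μ ν := by
  have hbd : ∀ᵐ x ∂μ, ‖f x‖ ≤ M := ae_of_all _ fun x => by
    rw [Real.norm_eq_abs, abs_of_nonneg (h0 x)]; exact hM x
  have hbd' : ∀ᵐ x ∂ν, ‖f x‖ ≤ M := ae_of_all _ fun x => by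
    rw [Real.norm_eq_abs, abs_of_nonneg (h0 x)]; exact hM x
  have intμ : Integrable f μ := ⟨hf.aestronglyMeasurable, HasFiniteIntegral.of_bounded hbd⟩
  have intν : Integrable f ν := ⟨hf.aestronglyMeasurable, HasFiniteIntegral.of_bounded hbd'⟩
  rw [intμ.integral_eq_integral_Ioc_meas_le (ae_of_all _ h0) (ae_of_all _ hM),
      intν.integral_eq_integral_Ioc_meas_le (ae_of_all _ h0) (ae_of_all _ hM)]
  set gμ : ℝ → ℝ := fun t => (μ {a | t ≤ f a}).toReal with hgμ
  set gν : ℝ → ℝ := fun t => (ν {a | t ≤ f a}).toReal with hgν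
  have hmeasset : ∀ t : ℝ, MeasurableSet {a | t ≤ f a} := fun t =>
    hf measurableSet_Ici
  have hmgμ : Measurable gμ := by
    apply Measurable.ennreal_toReal
    exact Antitone.measurable (fun s t hst => measure_mono (fun a h => le_trans hst h))
  have hmgν : Measurable gν := by
    apply Measurable.ennreal_toReal
    exact Antitone.measurable (fun s t hst => measure_mono (fun a h => le_trans hst h))
  have hintμ : IntegrableOn gμ (Set.Ioc 0 M) :=
    ⟨hmgμ.aestronglyMeasurable, HasFiniteIntegral.of_bounded (C := 1) (ae_of_all _ fun t => by
      rw [Real.norm_eq_abs, abs_of_nonneg ENNReal.toReal_nonneg]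
      exact ENNReal.toReal_le_of_le_ofReal zero_le_one (by simpa using prob_le_one))⟩
  have hintν : IntegrableOn gν (Set.Ioc 0 M) :=
    ⟨hmgν.aestronglyMeasurable, HasFiniteIntegral.of_bounded (C := 1) (ae_of_all _ fun t => by
      rw [Real.norm_eq_abs, abs_of_nonneg ENNReal.toReal_nonneg]
      exact ENNReal.toReal_le_of_le_ofReal zero_le_one (by simpa using prob_le_one))⟩
  change |(∫ t in Set.Ioc 0 M, gμ t) - ∫ t in Set.Ioc 0 M, gν t| ≤ _
  rw [← integral_sub hintμ hintν]
  calc |∫ t in Set.Ioc 0 M, (gμ t - gν t)| ≤ ∫ t in Set.Ioc 0 M, |gμ t - gν t| :=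
        by simpa using norm_integral_le_integral_norm (μ := volume.restrict (Set.Ioc 0 M)) (fun t => gμ t - gν t)
    _ ≤ ∫ _t in Set.Ioc 0 M, tv μ ν := by
        apply integral_mono (hintμ.sub hintν).abs (integrable_const _)
        intro t
        exact le_tv μ ν (hmeasset t)
    _ = M * tv μ ν := by
        rw [setIntegral_const]
        simp [Real.volume_Ioc, ENNReal.toReal_ofReal hM0, hM0]
/-- under the uniform exponential convergence
`‖P_μ(X_t ∈ · ∣ t<τ∂) − α‖_TV ≤ C e^{-γ t}`, there is `a₁ > 0` with
`|η_{t+s}(x)/η_t(x) − 1| ≤ a₁ e^{-γ t}` for all `x ∈ E`, `s, t ≥ 0`.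
Here `L μ t = P_μ(X_t ∈ · ∣ t < τ∂)` and `η t x = e^{λ₀ t} P_x(t < τ∂)`, which satisfies the
identity `η_{t+s}(x) = η_t(x) E_x(η_s(X_t) ∣ t<τ∂)`, is uniformly bounded, and `∫ η_s dα = 1`. -/
theorem ratio_eta_close_to_one {E : Type*} [MeasurableSpace E]
    (L : Measure E → ℝ → Measure E)  -- L μ t = P_μ(X_t ∈ · ∣ t < τ∂)
    (α : Measure E) [IsProbabilityMeasure α]
    (η : ℝ → E → ℝ) (C γ : ℝ) (hC : 0 < C) (hγ : 0 < γ)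
    (hLprob : ∀ (μ : Measure E) t, IsProbabilityMeasure μ → 0 ≤ t →
      IsProbabilityMeasure (L μ t))
    -- uniform exponential convergence in total variation
    (hconv : ∀ (μ : Measure E) t, IsProbabilityMeasure μ → 0 ≤ t →
      tv (L μ t) α ≤ C * exp (-γ * t))
    (hmeas : ∀ s, Measurable (η s))
    (hbdd : ∃ M, ∀ s x, 0 ≤ s → |η s x| ≤ M)
    (hηpos : ∀ t x, 0 ≤ t → 0 < η t x)
    (hα1 : ∀ s, 0 ≤ s → ∫ x, η s x ∂α = 1)
    -- η_{t+s}(x) = η_t(x) E_x(η_s(X_t) ∣ t < τ∂)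
    (hident : ∀ s t x, 0 ≤ s → 0 ≤ t →
       η (t + s) x = η t x * ∫ y, η s y ∂(L (Measure.dirac x) t)) :
    ∃ a₁ > 0, ∀ x s t, 0 ≤ s → 0 ≤ t →
      |η (t + s) x / η t x - 1| ≤ a₁ * exp (-γ * t) := by
  obtain ⟨M, hM⟩ := hbdd
  by_cases hE : Nonempty E
  · obtain ⟨x₀⟩ := hE
    have hMpos : 0 < M :=
      lt_of_lt_of_le (hηpos 0 x₀ le_rfl) (le_trans (le_abs_self _) (hM 0 x₀ le_rfl))
    refine ⟨M * C, by positivity, fun x s t hs ht => ?_⟩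
    haveI hLp : IsProbabilityMeasure (L (Measure.dirac x) t) :=
      hLprob (Measure.dirac x) t inferInstance ht
    have hne : η t x ≠ 0 := ne_of_gt (hηpos t x ht)
    have key : η (t + s) x / η t x - 1
        = (∫ y, η s y ∂(L (Measure.dirac x) t)) - ∫ y, η s y ∂α := by
      rw [hident s t x hs ht, hα1 s hs, mul_div_assoc]; field_simp
    rw [key]
    have h1 := abs_integral_sub_le_tv (L (Measure.dirac x) t) α (hmeas s)
      (fun y => le_of_lt (hηpos s y hs)) (fun y => le_trans (le_abs_self _) (hM s y hs))
      hMpos.le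
    have h2 := hconv (Measure.dirac x) t inferInstance ht
    calc |(∫ y, η s y ∂(L (Measure.dirac x) t)) - ∫ y, η s y ∂α| ≤ M * tv (L (Measure.dirac x) t) α := h1
      _ ≤ M * (C * exp (-γ * t)) := by
          apply mul_le_mul_of_nonneg_left h2 hMpos.le
      _ = M * C * exp (-γ * t) := by ring
  · exact ⟨1, one_pos, fun x => (hE ⟨x⟩).elim⟩
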